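/- For the Sasakian space form D³(-1), the basic CR Carathéodory pseudodistance satisfies c'_{D³(-1)}((z₁,t₁),(z₂,t₂)) = c^D(z₁,z₂) for all points, where c^D is the Carathéodory distance of the unit disk; in particular c'_{D³(-1)} is independent of the t-coordinates. -/

import Mathlib

noncomputable section

/-- The Poincaré (Bergman) distance on the unit disc of `ℂ`:
`ρ(a,b) = 2 artanh |(a-b)/(1- āb)| = log((1+δ)/(1-δ))`. -/
def poincareDist (a b : ℂ) : ℝ :=
  Real.log ((1 + ‖(a - b) / (1 - (starRingEnd ℂ) a * b)‖) /
    (1 - ‖(a - b) / (1 - (starRingEnd ℂ) a * b)‖))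

/-- `∂f/∂t` on `D × ℝ ⊆ ℂ × ℝ`, i.e. `df(ξ)` for the Reeb field `ξ = ∂/∂t`. -/
def dtD (f : ℂ × ℝ → ℂ) (p : ℂ × ℝ) : ℂ := fderiv ℝ f p (0, 1)

/-- the Wirtinger derivative `∂f/∂z̄ = ½(∂_x + i ∂_y) f` in the disc direction -/
def wirtZbar (f : ℂ × ℝ → ℂ) (p : ℂ × ℝ) : ℂ :=
  (1 / 2 : ℂ) * (fderiv ℝ f p (1, 0) + Complex.I * fderiv ℝ f p (Complex.I, 0))

/-- the Wirtinger derivative `∂f/∂z = ½(∂_x - i ∂_y) f` in the disc direction -/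
def wirtZ (f : ℂ × ℝ → ℂ) (p : ℂ × ℝ) : ℂ :=
  (1 / 2 : ℂ) * (fderiv ℝ f p (1, 0) - Complex.I * fderiv ℝ f p (Complex.I, 0))

/-- `T̄f` for the antiholomorphic frame field `T̄ = ∂/∂z̄ - i z/(1-|z|²) ∂/∂t` of
`T_{0,1}D³(-1)` on the Sasakian space form `D³(-1) = (D × ℝ, H, J, θ)`. -/
def TbarD (f : ℂ × ℝ → ℂ) (p : ℂ × ℝ) : ℂ :=
  wirtZbar f p - Complex.I * (p.1 / ((1 - ‖p.1‖ ^ 2 : ℝ) : ℂ)) * dtD f p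

/-- a CR function on `D³(-1)` : (smooth and) `T̄f = 0` on `D × ℝ`. -/
def IsCRD (f : ℂ × ℝ → ℂ) : Prop :=
  ∀ p : ℂ × ℝ, ‖p.1‖ < 1 → DifferentiableAt ℝ f p ∧ TbarD f p = 0

/-- a basic CR function on `D³(-1)` : (smooth and) `T̄f = 0` and `ξf = ∂f/∂t = 0`. -/
def IsBasicCRD (f : ℂ × ℝ → ℂ) : Prop :=
  ∀ p : ℂ × ℝ, ‖p.1‖ < 1 →
    DifferentiableAt ℝ f p ∧ TbarD f p = 0 ∧ dtD f p = 0

/-- the basic CR Carathéodory pseudodistance `c'_{D³(-1)}` of the Sasakian space form -/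
def cBasicD (p q : ℂ × ℝ) : ℝ :=
  sSup {r : ℝ | ∃ f : ℂ × ℝ → ℂ, IsBasicCRD f ∧
    (∀ x : ℂ × ℝ, ‖x.1‖ < 1 → ‖f x‖ < 1) ∧
    r = poincareDist (f p) (f q)}

/-- the Carathéodory distance `c^D` of the unit disc -/
def caraD (a b : ℂ) : ℝ :=
  sSup {r : ℝ | ∃ F : ℂ → ℂ, DifferentiableOn ℂ F (Metric.ball 0 1) ∧
    (∀ w : ℂ, ‖w‖ < 1 → ‖F w‖ < 1) ∧
    r = poincareDist (F a) (F b)}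

/-! ### Auxiliary lemmas -/

lemma mem_ball_iff_abs {z : ℂ} : z ∈ Metric.ball (0 : ℂ) 1 ↔ ‖z‖ < 1 := by
  simp [Metric.mem_ball, Complex.dist_eq]

/-- A basic CR function is independent of the `t`-coordinate. -/
lemma IsBasicCRD.const_t {f : ℂ × ℝ → ℂ} (hf : IsBasicCRD f) {z : ℂ}
    (hz : ‖z‖ < 1) (t s : ℝ) : f (z, t) = f (z, s) := by
  have hderiv : ∀ u : ℝ, HasDerivAt (fun u : ℝ => f (z, u)) 0 u := by
    intro u
    have h1 : HasFDerivAt (fun u : ℝ => ((z, u) : ℂ × ℝ))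
        (((0 : ℝ →L[ℝ] ℂ)).prod (ContinuousLinearMap.id ℝ ℝ)) u :=
      HasFDerivAt.prodMk (hasFDerivAt_const z u) (hasFDerivAt_id u)
    have h2 := ((hf (z, u) hz).1.hasFDerivAt).comp u h1
    have h3 := h2.hasDerivAt
    have h4 : fderiv ℝ f (z, u) (0, 1) = 0 := (hf (z, u) hz).2.2
    simpa [h4, Function.comp_def] using h3
  exact is_const_of_deriv_eq_zero (fun u => (hderiv u).differentiableAt)
    (fun u => (hderiv u).deriv) t s

lemma slice_hasFDerivAt {f : ℂ × ℝ → ℂ} {z : ℂ} {t : ℝ}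
    (hf : DifferentiableAt ℝ f (z, t)) :
    HasFDerivAt (fun w : ℂ => f (w, t))
      ((fderiv ℝ f (z, t)).comp
        ((ContinuousLinearMap.id ℝ ℂ).prod (0 : ℂ →L[ℝ] ℝ))) z :=
  hf.hasFDerivAt.comp z (HasFDerivAt.prodMk (hasFDerivAt_id z) (hasFDerivAt_const t z))

/-- Slices of a basic CR function are holomorphic on the disc. -/
lemma IsBasicCRD.holo {f : ℂ × ℝ → ℂ} (hf : IsBasicCRD f) (t : ℝ) :
    DifferentiableOn ℂ (fun w : ℂ => f (w, t)) (Metric.ball 0 1) := by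
  intro z hzball
  have hz : ‖z‖ < 1 := mem_ball_iff_abs.1 hzball
  obtain ⟨hdiff, hTbar, hdt⟩ := hf (z, t) hz
  set L := fderiv ℝ f (z, t) with hL
  -- from Tbar = 0 and dt = 0 we get the Cauchy–Riemann equation
  have hCR : L (Complex.I, 0) = Complex.I * L (1, 0) := by
    have hz0 : wirtZbar f (z, t) = 0 := by
      have h := hTbar
      simp only [TbarD] at h
      rw [hdt] at h
      simpa using h
    have h' : L (1, 0) + Complex.I * L (Complex.I, 0) = 0 := by
      have := hz0
      simp only [wirtZbar, ← hL] at this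
      field_simp at this
      simpa using this
    have : Complex.I * (L (1, 0) + Complex.I * L (Complex.I, 0)) = 0 := by rw [h']; ring
    have h2 : Complex.I * L (1, 0) - L (Complex.I, 0) = 0 := by
      have hI := Complex.I_mul_I
      calc Complex.I * L (1, 0) - L (Complex.I, 0)
          = Complex.I * (L (1, 0) + Complex.I * L (Complex.I, 0)) := by
            rw [mul_add, ← mul_assoc, Complex.I_mul_I]; ring
        _ = 0 := this
    linear_combination -h2
  -- the slice is real differentiable
  have hslice := slice_hasFDerivAt hdiff
  have hRdiff : DifferentiableAt ℝ (fun w : ℂ => f (w, t)) z := hslice.differentiableAt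
  -- candidate complex derivative
  set A : ℂ := L (1, 0) with hA
  have key : ∀ v : ℂ, fderiv ℝ (fun w : ℂ => f (w, t)) z v = A * v := by
    intro v
    rw [hslice.fderiv]
    have hv : (v, (0 : ℝ)) = v.re • ((1 : ℂ), (0 : ℝ)) + v.im • (Complex.I, (0 : ℝ)) := by
      simp only [Prod.ext_iff, Prod.smul_fst, Prod.smul_snd, Prod.fst_add, Prod.snd_add,
        smul_eq_mul, Complex.real_smul]
      constructor
      · conv_lhs => rw [← Complex.re_add_im v]
        ring
      · simp
    simp only [ContinuousLinearMap.comp_apply, ContinuousLinearMap.prod_apply,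
      ContinuousLinearMap.id_apply, ContinuousLinearMap.zero_apply]
    rw [hv, map_add, map_smul, map_smul, hCR]
    simp [Complex.real_smul, ← hL, ← hA]
    conv_rhs => rw [← Complex.re_add_im v]
    ring
  refine DifferentiableAt.differentiableWithinAt ?_
  refine (differentiableAt_iff_restrictScalars ℝ hRdiff).2 ⟨A • (ContinuousLinearMap.id ℂ ℂ), ?_⟩
  ext v
  simp [key v, mul_comm]

/-- A holomorphic function composed with `fst` is basic CR. -/
lemma basic_of_holo {F : ℂ → ℂ} (hF : DifferentiableOn ℂ F (Metric.ball 0 1)) :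
    IsBasicCRD (fun p : ℂ × ℝ => F p.1) := by
  intro p hp
  have hFz : DifferentiableAt ℂ F p.1 :=
    hF.differentiableAt (Metric.isOpen_ball.mem_nhds (mem_ball_iff_abs.2 hp))
  have hder : HasFDerivAt (fun q : ℂ × ℝ => F q.1)
      (((fderiv ℂ F p.1).restrictScalars ℝ).comp (ContinuousLinearMap.fst ℝ ℂ ℝ)) p :=
    (hFz.hasFDerivAt.restrictScalars ℝ).comp p hasFDerivAt_fst
  have hval : ∀ v : ℂ × ℝ, fderiv ℝ (fun q : ℂ × ℝ => F q.1) p v = fderiv ℂ F p.1 v.1 := by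
    intro v; rw [hder.fderiv]; rfl
  have hlin : ∀ w : ℂ, fderiv ℂ F p.1 w = w * fderiv ℂ F p.1 1 := by
    intro w
    calc fderiv ℂ F p.1 w = fderiv ℂ F p.1 (w • 1) := by rw [smul_eq_mul, mul_one]
      _ = w • fderiv ℂ F p.1 1 := map_smul _ _ _
      _ = w * fderiv ℂ F p.1 1 := rfl
  have hdt : dtD (fun q : ℂ × ℝ => F q.1) p = 0 := by
    simp [dtD, hval]
  have hwb : wirtZbar (fun q : ℂ × ℝ => F q.1) p = 0 := by
    simp only [wirtZbar, hval]
    rw [hlin Complex.I, hlin 1]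
    ring_nf
    rw [Complex.I_sq]
    ring
  exact ⟨hder.differentiableAt, by simp [TbarD, hwb, hdt], hdt⟩


/-- For the Sasakian space form `D³(-1)`, the basic CR Carathéodory pseudodistance satisfies
`c'_{D³(-1)}((z₁,t₁),(z₂,t₂)) = c^D(z₁,z₂)`; in particular it is independent of the
`t`-coordinates. -/
theorem cBasicD_eq_caraD :
    ∀ z₁ z₂ : ℂ, ‖z₁‖ < 1 → ‖z₂‖ < 1 →
      ∀ t₁ t₂ : ℝ, cBasicD (z₁, t₁) (z₂, t₂) = caraD z₁ z₂ := by
  intro z₁ z₂ h₁ h₂ t₁ t₂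
  unfold cBasicD caraD
  congr 1
  ext r
  constructor
  · rintro ⟨f, hf, hb, rfl⟩
    refine ⟨fun w => f (w, t₁), hf.holo t₁, fun w hw => hb (w, t₁) hw, ?_⟩
    have : f (z₂, t₂) = f (z₂, t₁) := hf.const_t h₂ t₂ t₁
    simp [this]
  · rintro ⟨F, hF, hb, rfl⟩
    exact ⟨fun p => F p.1, basic_of_holo hF, fun x hx => hb x.1 hx, rfl⟩
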